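/- Let s be a binary word that is empty or ends with the letter B, and let n be a non-negative integer. Then for every binary word t of length n, P(s ∘ t) ≤ P(s ∘ z_n), where z_n is the alternating word ABAB… of length n. -/

import Mathlib

/-- `P s` is the number of distinct subsequences of the binary word `s`
(the letter `A` is `true`, the letter `B` is `false`), including the empty one. -/
def P (s : List Bool) : ℕ := s.sublists.toFinset.card

/-- `PA s` is the number of distinct subsequences of `s` starting with `A` (= `true`),
plus one for the empty subsequence. -/
def PA (s : List Bool) : ℕ :=
  ((s.sublists.toFinset).filter (fun t => t.head? = some true)).card + 1

/-- `PB s` is the number of distinct subsequences of `s` starting with `B` (= `false`),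
plus one for the empty subsequence. -/
def PB (s : List Bool) : ℕ :=
  ((s.sublists.toFinset).filter (fun t => t.head? = some false)).card + 1

/-- `QA s` is the number of distinct subsequences of `s` ending with `A` (= `true`),
plus one for the empty subsequence. -/
def QA (s : List Bool) : ℕ :=
  ((s.sublists.toFinset).filter (fun t => t.getLast? = some true)).card + 1

/-- `QB s` is the number of distinct subsequences of `s` ending with `B` (= `false`),
plus one for the empty subsequence. -/
def QB (s : List Bool) : ℕ :=
  ((s.sublists.toFinset).filter (fun t => t.getLast? = some false)).card + 1

/-- The word `gen a b`, defined by the Euclidean recursion: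
`gen 1 1 = []`, `gen a b = A ∘ gen (a-b) b` if `a > b`, `gen a b = B ∘ gen a (b-a)` if `b > a`. -/
def gen : ℕ → ℕ → List Bool
  | 0, _ => []
  | _ + 1, 0 => []
  | a + 1, b + 1 =>
    if a > b then true :: gen (a - b) (b + 1)
    else if b > a then false :: gen (a + 1) (b - a)
    else []
termination_by a b => a + b
decreasing_by all_goals omega

/-- `star s` swaps all letters `A` and `B` in `s`. -/
def star (s : List Bool) : List Bool := s.map (fun x => !x)

/-- `z n` is the alternating word `ABAB…` of length `n`. -/
def z : ℕ → List Bool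
  | 0 => []
  | n + 1 => true :: star (z n)

/-- Auxiliary state machine: process `t` left to right with state `(a,b)`. -/
def val : List Bool → ℕ → ℕ → ℕ
  | [], a, b => a + b
  | true :: t, a, b => val t (a + b) b
  | false :: t, a, b => val t a (a + b)

lemma star_cons (x : Bool) (t : List Bool) : star (x :: t) = (!x) :: star t := rfl

lemma star_star' (t : List Bool) : star (star t) = t := by
  induction t with
  | nil => rfl
  | cons x t ih => rw [star_cons, star_cons, ih, Bool.not_not]

lemma val_star (t : List Bool) (a b : ℕ) : val (star t) a b = val t b a := by
  induction t generalizing a b with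
  | nil => show a + b = b + a; omega
  | cons x t ih =>
    cases x <;> rw [star_cons] <;> simp only [val, Bool.not_false, Bool.not_true] <;>
      rw [ih, Nat.add_comm]

lemma val_mono {t : List Bool} {a b a' b' : ℕ} (ha : a ≤ a') (hb : b ≤ b') :
    val t a b ≤ val t a' b' := by
  induction t generalizing a b a' b' with
  | nil => simpa [val] using Nat.add_le_add ha hb
  | cons x t ih => cases x <;> simp only [val] <;> exact ih (by omega) (by omega)

lemma val_z_succ (n a b : ℕ) : val (z (n + 1)) a b = val (z n) b (a + b) := by
  show val (star (z n)) (a + b) b = _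
  rw [val_star]

lemma star_z_succ (n : ℕ) : star (z (n + 1)) = false :: z n := by
  show star (true :: star (z n)) = _
  rw [star_cons, star_star']; rfl

lemma val_le_z (t : List Bool) :
    (∀ a b : ℕ, a ≤ b → val t a b ≤ val (z t.length) a b) ∧
    (∀ a b : ℕ, b ≤ a → val t a b ≤ val (star (z t.length)) a b) := by
  induction t with
  | nil => exact ⟨fun a b _ => le_rfl, fun a b _ => le_rfl⟩
  | cons x t ih =>
    obtain ⟨ih1, ih2⟩ := ih
    cases x
    · -- x = false
      constructor
      · intro a b hab
        rw [List.length_cons, val_z_succ]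
        show val t a (a + b) ≤ _
        calc val t a (a + b) ≤ val t b (a + b) := val_mono hab le_rfl
          _ ≤ val (z t.length) b (a + b) := ih1 b (a + b) (by omega)
      · intro a b hab
        rw [List.length_cons, star_z_succ]
        show val t a (a + b) ≤ val (z t.length) a (a + b)
        exact ih1 a (a + b) (by omega)
    · -- x = true
      constructor
      · intro a b hab
        rw [List.length_cons, val_z_succ]
        show val t (a + b) b ≤ _
        have := ih2 (a + b) b (by omega)
        rwa [val_star] at this
      · intro a b hab
        rw [List.length_cons, star_z_succ]
        show val t (a + b) b ≤ val (z t.length) a (a + b)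
        calc val t (a + b) b ≤ val t (a + b) a := val_mono le_rfl hab
          _ ≤ val (star (z t.length)) (a + b) a := ih2 (a + b) a (by omega)
          _ = val (z t.length) a (a + b) := val_star _ _ _

lemma mem_S {u s : List Bool} : u ∈ s.sublists.toFinset ↔ u.Sublist s := by
  simp [List.mem_sublists]

lemma S_concat (s : List Bool) (x : Bool) :
    (s ++ [x]).sublists.toFinset =
      s.sublists.toFinset ∪ (s.sublists.toFinset).image (· ++ [x]) := by
  ext u
  simp only [Finset.mem_union, Finset.mem_image, mem_S]
  constructor
  · intro h
    rw [List.sublist_append_iff] at h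
    obtain ⟨u1, u2, rfl, h1, h2⟩ := h
    rcases List.sublist_singleton.mp h2 with rfl | rfl
    · left; simpa using h1
    · right; exact ⟨u1, h1, rfl⟩
  · rintro (h | ⟨v, hv, rfl⟩)
    · exact h.trans (List.sublist_append_left _ _)
    · exact hv.append (List.Sublist.refl _)

lemma filter_eq_concat (s : List Bool) (x : Bool) :
    ((s ++ [x]).sublists.toFinset.filter (fun t => t.getLast? = some x)) =
      s.sublists.toFinset.image (· ++ [x]) := by
  rw [S_concat, Finset.filter_union]
  have h2 : (s.sublists.toFinset.image (· ++ [x])).filter (fun t => t.getLast? = some x)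
      = s.sublists.toFinset.image (· ++ [x]) := by
    apply Finset.filter_true_of_mem
    intro u hu
    obtain ⟨v, _, rfl⟩ := Finset.mem_image.mp hu
    exact List.getLast?_concat
  rw [h2]
  apply Finset.union_eq_right.mpr
  intro u hu
  obtain ⟨hu1, hu2⟩ := Finset.mem_filter.mp hu
  obtain ⟨v, rfl⟩ := List.getLast?_eq_some_iff.mp hu2
  exact Finset.mem_image.mpr ⟨v, mem_S.mpr (((List.sublist_append_left v [x]).trans
    (mem_S.mp hu1))), rfl⟩

lemma filter_ne_concat (s : List Bool) (x : Bool) :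
    ((s ++ [x]).sublists.toFinset.filter (fun t => t.getLast? = some (!x))) =
      s.sublists.toFinset.filter (fun t => t.getLast? = some (!x)) := by
  rw [S_concat, Finset.filter_union]
  have h2 : (s.sublists.toFinset.image (· ++ [x])).filter (fun t => t.getLast? = some (!x))
      = ∅ := by
    apply Finset.filter_false_of_mem
    intro u hu
    obtain ⟨v, _, rfl⟩ := Finset.mem_image.mp hu
    rw [List.getLast?_concat]
    simp
  rw [h2, Finset.union_empty]

lemma card_filter_eq_concat (s : List Bool) (x : Bool) :
    ((s ++ [x]).sublists.toFinset.filter (fun t => t.getLast? = some x)).card = P s := by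
  rw [filter_eq_concat, Finset.card_image_of_injective _
    (fun a b h => List.append_cancel_right h)]
  rfl

lemma QAQB (s : List Bool) : QA s + QB s = P s + 1 := by
  have hsplit := Finset.card_filter_add_card_filter_not
    (s := s.sublists.toFinset) (fun t : List Bool => t.getLast? = some true)
  have hins : s.sublists.toFinset.filter (fun t => ¬ t.getLast? = some true)
      = insert [] (s.sublists.toFinset.filter (fun t => t.getLast? = some false)) := by
    ext u
    simp only [Finset.mem_filter, Finset.mem_insert, mem_S]
    constructor
    · rintro ⟨h1, h2⟩
      rcases List.eq_nil_or_concat u with rfl | ⟨v, b, rfl⟩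
      · exact Or.inl rfl
      · right
        refine ⟨h1, ?_⟩
        rw [List.concat_eq_append, List.getLast?_concat] at h2 ⊢
        cases b
        · rfl
        · exact absurd rfl h2
    · rintro (rfl | ⟨h1, h2⟩)
      · exact ⟨List.nil_sublist s, by simp⟩
      · exact ⟨h1, by simp [h2]⟩
  have hcard : (s.sublists.toFinset.filter (fun t => ¬ t.getLast? = some true)).card
      = (s.sublists.toFinset.filter (fun t => t.getLast? = some false)).card + 1 := by
    rw [hins, Finset.card_insert_of_notMem (by simp)]
  simp only [QA, QB, P] at *
  omega

lemma QA_concat_true (s : List Bool) : QA (s ++ [true]) = QA s + QB s := by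
  have := card_filter_eq_concat s true
  have h2 := QAQB s
  simp only [QA] at *
  omega

lemma QB_concat_true (s : List Bool) : QB (s ++ [true]) = QB s := by
  have := filter_ne_concat s true
  simp only [Bool.not_true] at this
  simp only [QB, this]

lemma QB_concat_false (s : List Bool) : QB (s ++ [false]) = QA s + QB s := by
  have := card_filter_eq_concat s false
  have h2 := QAQB s
  simp only [QB] at *
  omega

lemma QA_concat_false (s : List Bool) : QA (s ++ [false]) = QA s := by
  have := filter_ne_concat s false
  simp only [Bool.not_false] at this
  simp only [QA, this]

lemma P_val (t : List Bool) : ∀ s : List Bool, P (s ++ t) + 1 = val t (QA s) (QB s) := by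
  induction t with
  | nil => intro s; simp only [List.append_nil, val]; have := QAQB s; omega
  | cons x t ih =>
    intro s
    have : s ++ x :: t = (s ++ [x]) ++ t := by simp
    rw [this, ih (s ++ [x])]
    cases x
    · simp only [val, QA_concat_false, QB_concat_false]
    · simp only [val, QA_concat_true, QB_concat_true]

/-- Let `s` be a binary word that is empty or ends with the letter `B`, and let `n ≥ 0`.
Then for every binary word `t` of length `n`, `P(s ∘ t) ≤ P(s ∘ z_n)`. -/
theorem append_alternating_maximizes (s : List Bool)
    (hs : s = [] ∨ s.getLast? = some false) (n : ℕ) (t : List Bool) (ht : t.length = n) :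
    P (s ++ t) ≤ P (s ++ z n) := by
  subst ht
  have hab : QA s ≤ QB s := by
    rcases hs with rfl | hs
    · exact le_rfl
    · obtain ⟨s', rfl⟩ := List.getLast?_eq_some_iff.mp hs
      rw [QA_concat_false, QB_concat_false]
      omega
  have h1 := P_val t s
  have h2 := P_val (z t.length) s
  have h3 := (val_le_z t).1 (QA s) (QB s) hab
  omega
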